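/- Let R_1, …, R_n be a REP instance of pairwise disjoint rectangles with optimal density k, and let ρ be its number of nonempty peeling levels. Then k ≤ 2ρ (each level can escape with density at most 2, so removing a level decreases the optimal density by at most 2). -/

import Mathlib

/-- One of the four axis-aligned escape directions. -/
inductive Dir | left | right | up | down
deriving DecidableEq

instance : Fintype Dir :=
  ⟨{Dir.left, Dir.right, Dir.up, Dir.down}, fun x => by cases x <;> simp⟩

/-- A closed axis-aligned rectangle `[xmin,xmax] × [ymin,ymax]`. -/
structure Rect where
  xmin : ℝ
  xmax : ℝ
  ymin : ℝ
  ymax : ℝ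

/-- The point set of a rectangle. -/
def Rect.pts (r : Rect) : Set (ℝ × ℝ) :=
  {p | r.xmin ≤ p.1 ∧ p.1 ≤ r.xmax ∧ r.ymin ≤ p.2 ∧ p.2 ≤ r.ymax}

/-- The rectangle is a genuine (nonempty) closed rectangle. -/
def Rect.proper (r : Rect) : Prop := r.xmin ≤ r.xmax ∧ r.ymin ≤ r.ymax

/-- The boundary box `B = [0,W] × [0,H]`. -/
def boundaryBox (W H : ℝ) : Set (ℝ × ℝ) := {p | 0 ≤ p.1 ∧ p.1 ≤ W ∧ 0 ≤ p.2 ∧ p.2 ≤ H}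

/-- The rectangle is contained in the boundary box `[0,W] × [0,H]`. -/
def Rect.inB (W H : ℝ) (r : Rect) : Prop :=
  0 ≤ r.xmin ∧ r.xmax ≤ W ∧ 0 ≤ r.ymin ∧ r.ymax ≤ H

/-- The escape path of a rectangle in a given direction, inside `[0,W] × [0,H]`. -/
def Rect.escape (W H : ℝ) (r : Rect) : Dir → Set (ℝ × ℝ)
  | Dir.right => {p | r.xmin ≤ p.1 ∧ p.1 ≤ W ∧ r.ymin ≤ p.2 ∧ p.2 ≤ r.ymax}
  | Dir.left  => {p | 0 ≤ p.1 ∧ p.1 ≤ r.xmax ∧ r.ymin ≤ p.2 ∧ p.2 ≤ r.ymax}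
  | Dir.up    => {p | r.xmin ≤ p.1 ∧ p.1 ≤ r.xmax ∧ r.ymin ≤ p.2 ∧ p.2 ≤ H}
  | Dir.down  => {p | r.xmin ≤ p.1 ∧ p.1 ≤ r.xmax ∧ 0 ≤ p.2 ∧ p.2 ≤ r.ymax}

/-- Density at point `p` of the escape assignment `σ` restricted to the subfamily `S`. -/
noncomputable def density {n : ℕ} (W H : ℝ) (R : Fin n → Rect) (S : Set (Fin n))
    (σ : Fin n → Dir) (p : ℝ × ℝ) : ℕ :=
  {i | i ∈ S ∧ p ∈ (R i).escape W H (σ i)}.ncard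

/-- The optimal (minimum over assignments of the maximum over points of `B`) density of
the subfamily `S`. -/
noncomputable def optDensity {n : ℕ} (W H : ℝ) (R : Fin n → Rect) (S : Set (Fin n)) : ℕ :=
  sInf {k | ∃ σ : Fin n → Dir, ∀ p ∈ boundaryBox W H, density W H R S σ p ≤ k}

/-- `R j` blocks `R i` in direction `α`. -/
def blocks {n : ℕ} (W H : ℝ) (R : Fin n → Rect) (α : Dir) (j i : Fin n) : Prop :=
  j ≠ i ∧ ¬ Disjoint (R j).pts ((R i).escape W H α)

/-- `R i` is free in direction `α` within the subfamily `S`: no other rectangle of `S`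
blocks it in direction `α`. -/
def free {n : ℕ} (W H : ℝ) (R : Fin n → Rect) (S : Set (Fin n)) (i : Fin n) (α : Dir) : Prop :=
  ∀ j ∈ S, j ≠ i → Disjoint ((R i).escape W H α) (R j).pts

/-- `peel W H R ℓ` is the set of indices remaining after removing peeling levels `1,…,ℓ`. -/
def peel {n : ℕ} (W H : ℝ) (R : Fin n → Rect) : ℕ → Set (Fin n)
  | 0 => Set.univ
  | ℓ + 1 => {i ∈ peel W H R ℓ | ¬ ∃ α, free W H R (peel W H R ℓ) i α}

/-- The peeling level of rectangle `R i` (the least `ℓ` at which it has been removed). -/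
noncomputable def levelOf {n : ℕ} (W H : ℝ) (R : Fin n → Rect) (i : Fin n) : ℕ :=
  sInf {ℓ | i ∉ peel W H R ℓ}

/-- The number `ρ` of nonempty peeling levels. -/
noncomputable def numLevels {n : ℕ} (W H : ℝ) (R : Fin n → Rect) : ℕ :=
  sInf {ℓ | peel W H R ℓ = ∅}

lemma free_no_point {n : ℕ} {W H : ℝ} {R : Fin n → Rect} {S : Set (Fin n)} {i j : Fin n}
    {α : Dir} (hf : free W H R S i α) (hj : j ∈ S) (hji : j ≠ i) {q : ℝ × ℝ}
    (h1 : q ∈ (R i).escape W H α) (h2 : q ∈ (R j).pts) : False :=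
  Set.disjoint_left.mp (hf j hj hji) h1 h2

lemma exists_free {n : ℕ} (W H : ℝ) (R : Fin n → Rect)
    (hprop : ∀ i, (R i).proper)
    (hdisj : ∀ i j, i ≠ j → Disjoint (R i).pts (R j).pts)
    (S : Set (Fin n)) (hS : S.Nonempty) :
    ∃ i ∈ S, ∃ α, free W H R S i α := by
  obtain ⟨i, hiS, hmax⟩ := Set.exists_max_image S (fun i => (R i).xmin) (Set.toFinite S) hS
  refine ⟨i, hiS, Dir.right, ?_⟩
  intro j hj hne
  rw [Set.disjoint_left]
  rintro q hqi hqj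
  obtain ⟨h1, h2, h3, h4⟩ := hqi
  obtain ⟨g1, g2, g3, g4⟩ := hqj
  exact Set.disjoint_left.mp (hdisj i j (Ne.symm hne))
    (show ((R i).xmin, q.2) ∈ (R i).pts from ⟨le_refl _, (hprop i).1, h3, h4⟩)
    (⟨hmax j hj, le_trans h1 g2, g3, g4⟩)

lemma peel_succ_subset {n : ℕ} (W H : ℝ) (R : Fin n → Rect) (ℓ : ℕ) :
    peel W H R (ℓ + 1) ⊆ peel W H R ℓ := fun _ h => h.1

lemma peel_empty_of_card {n : ℕ} (W H : ℝ) (R : Fin n → Rect)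
    (hprop : ∀ i, (R i).proper)
    (hdisj : ∀ i j, i ≠ j → Disjoint (R i).pts (R j).pts) :
    peel W H R n = ∅ := by
  have key : ∀ ℓ, (peel W H R ℓ).ncard ≤ n - ℓ := by
    intro ℓ
    induction ℓ with
    | zero => simp [peel, Set.ncard_univ]
    | succ m ih =>
      rcases Set.eq_empty_or_nonempty (peel W H R m) with he | hne
      · have : peel W H R (m+1) = ∅ :=
          Set.eq_empty_of_subset_empty (he ▸ peel_succ_subset W H R m)
        simp [this]
      · obtain ⟨i, hiS, hα⟩ := exists_free W H R hprop hdisj _ hne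
        have hss : peel W H R (m+1) ⊂ peel W H R m := by
          refine ⟨peel_succ_subset W H R m, fun hsub => ?_⟩
          have : i ∈ peel W H R (m+1) := hsub hiS
          exact this.2 hα
        have := Set.ncard_lt_ncard hss (Set.toFinite _)
        omega
  have := key n
  simp only [Nat.sub_self, Nat.le_zero] at this
  exact (Set.ncard_eq_zero (Set.toFinite _)).mp this

-- horizontal clash
lemma horiz_clash {n : ℕ} {W H : ℝ} {R : Fin n → Rect}
    (hprop : ∀ i, (R i).proper) (hin : ∀ i, (R i).inB W H)
    {S : Set (Fin n)} {i j : Fin n} (hi : i ∈ S) (hj : j ∈ S) (hij : i ≠ j)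
    {αi αj : Dir} (hfi : free W H R S i αi) (hfj : free W H R S j αj)
    (hαi : αi = Dir.left ∨ αi = Dir.right) (hαj : αj = Dir.left ∨ αj = Dir.right)
    {p : ℝ × ℝ} (hpi : p ∈ (R i).escape W H αi) (hpj : p ∈ (R j).escape W H αj) : False := by
  obtain ⟨pi1, qi1⟩ := hprop i
  obtain ⟨pj1, qj1⟩ := hprop j
  obtain ⟨ii1, ii2, jj1, jj2⟩ := hin i
  obtain ⟨ki1, ki2, li1, li2⟩ := hin j
  rcases hαi with rfl | rfl <;> rcases hαj with rfl | rfl <;>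
    obtain ⟨h1, h2, h3, h4⟩ := hpi <;> obtain ⟨g1, g2, g3, g4⟩ := hpj
  · -- left, left
    by_cases h : (R j).xmin ≤ (R i).xmax
    · exact free_no_point hfi hj (Ne.symm hij)
        (show (min (R i).xmax (R j).xmax, p.2) ∈ (R i).escape W H Dir.left from
          ⟨le_min (by linarith) (by linarith), min_le_left _ _, h3, h4⟩)
        ⟨le_min (by linarith) (by linarith), min_le_right _ _, g3, g4⟩
    · push_neg at h
      exact free_no_point hfj hi hij
        (show ((R i).xmax, p.2) ∈ (R j).escape W H Dir.left from
          ⟨by linarith, by linarith, g3, g4⟩)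
        ⟨pi1, le_refl _, h3, h4⟩
  · -- i left, j right : xmin_j ≤ p.1 ≤ xmax_i
    exact free_no_point hfj hi hij
      (show (max (R j).xmin (R i).xmin, p.2) ∈ (R j).escape W H Dir.right from
        ⟨le_max_left _ _, max_le (by linarith) (by linarith), g3, g4⟩)
      ⟨le_max_right _ _, max_le (by linarith) pi1, h3, h4⟩
  · -- i right, j left : xmin_i ≤ p.1 ≤ xmax_j
    exact free_no_point hfi hj (Ne.symm hij)
      (show (max (R i).xmin (R j).xmin, p.2) ∈ (R i).escape W H Dir.right from
        ⟨le_max_left _ _, max_le (by linarith) (by linarith), h3, h4⟩)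
      ⟨le_max_right _ _, max_le (by linarith) pj1, g3, g4⟩
  · -- right, right
    by_cases h : (R i).xmin ≤ (R j).xmax
    · exact free_no_point hfi hj (Ne.symm hij)
        (show (max (R i).xmin (R j).xmin, p.2) ∈ (R i).escape W H Dir.right from
          ⟨le_max_left _ _, max_le (by linarith) (by linarith), h3, h4⟩)
        ⟨le_max_right _ _, max_le h pj1, g3, g4⟩
    · push_neg at h
      exact free_no_point hfj hi hij
        (show ((R i).xmin, p.2) ∈ (R j).escape W H Dir.right from
          ⟨by linarith, by linarith, g3, g4⟩)
        ⟨le_refl _, pi1, h3, h4⟩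

-- vertical clash
lemma vert_clash {n : ℕ} {W H : ℝ} {R : Fin n → Rect}
    (hprop : ∀ i, (R i).proper) (hin : ∀ i, (R i).inB W H)
    {S : Set (Fin n)} {i j : Fin n} (hi : i ∈ S) (hj : j ∈ S) (hij : i ≠ j)
    {αi αj : Dir} (hfi : free W H R S i αi) (hfj : free W H R S j αj)
    (hαi : αi = Dir.down ∨ αi = Dir.up) (hαj : αj = Dir.down ∨ αj = Dir.up)
    {p : ℝ × ℝ} (hpi : p ∈ (R i).escape W H αi) (hpj : p ∈ (R j).escape W H αj) : False := by
  obtain ⟨pi1, qi1⟩ := hprop i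
  obtain ⟨pj1, qj1⟩ := hprop j
  obtain ⟨ii1, ii2, jj1, jj2⟩ := hin i
  obtain ⟨ki1, ki2, li1, li2⟩ := hin j
  rcases hαi with rfl | rfl <;> rcases hαj with rfl | rfl <;>
    obtain ⟨h1, h2, h3, h4⟩ := hpi <;> obtain ⟨g1, g2, g3, g4⟩ := hpj
  · -- down, down
    by_cases h : (R j).ymin ≤ (R i).ymax
    · exact free_no_point hfi hj (Ne.symm hij)
        (show (p.1, min (R i).ymax (R j).ymax) ∈ (R i).escape W H Dir.down from
          ⟨h1, h2, le_min (by linarith) (by linarith), min_le_left _ _⟩)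
        ⟨g1, g2, le_min (by linarith) (by linarith), min_le_right _ _⟩
    · push_neg at h
      exact free_no_point hfj hi hij
        (show (p.1, (R i).ymax) ∈ (R j).escape W H Dir.down from
          ⟨g1, g2, by linarith, by linarith⟩)
        ⟨h1, h2, qi1, le_refl _⟩
  · -- i down, j up : ymin_j ≤ p.2 ≤ ymax_i
    exact free_no_point hfj hi hij
      (show (p.1, max (R j).ymin (R i).ymin) ∈ (R j).escape W H Dir.up from
        ⟨g1, g2, le_max_left _ _, max_le (by linarith) (by linarith)⟩)
      ⟨h1, h2, le_max_right _ _, max_le (by linarith) qi1⟩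
  · -- i up, j down : ymin_i ≤ p.2 ≤ ymax_j
    exact free_no_point hfi hj (Ne.symm hij)
      (show (p.1, max (R i).ymin (R j).ymin) ∈ (R i).escape W H Dir.up from
        ⟨h1, h2, le_max_left _ _, max_le (by linarith) (by linarith)⟩)
      ⟨g1, g2, le_max_right _ _, max_le (by linarith) qj1⟩
  · -- up, up
    by_cases h : (R i).ymin ≤ (R j).ymax
    · exact free_no_point hfi hj (Ne.symm hij)
        (show (p.1, max (R i).ymin (R j).ymin) ∈ (R i).escape W H Dir.up from
          ⟨h1, h2, le_max_left _ _, max_le (by linarith) (by linarith)⟩)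
        ⟨g1, g2, le_max_right _ _, max_le h qj1⟩
    · push_neg at h
      exact free_no_point hfj hi hij
        (show (p.1, (R i).ymin) ∈ (R j).escape W H Dir.up from
          ⟨g1, g2, by linarith, by linarith⟩)
        ⟨h1, h2, le_refl _, qi1⟩

def isHoriz : Dir → Bool
  | Dir.left => true
  | Dir.right => true
  | Dir.up => false
  | Dir.down => false

/-- For a pairwise disjoint REP instance with optimal density `k` and `ρ`
nonempty peeling levels, `k ≤ 2ρ`. -/
theorem density_le_two_levels {n : ℕ} (W H : ℝ) (R : Fin n → Rect)
    (hprop : ∀ i, (R i).proper) (hin : ∀ i, (R i).inB W H)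
    (hdisj : ∀ i j, i ≠ j → Disjoint (R i).pts (R j).pts)
    (k ρ : ℕ) (hk : k = optDensity W H R Set.univ) (hρ : ρ = numLevels W H R) :
    k ≤ 2 * ρ := by
  classical
  subst hk hρ
  set ρ' := numLevels W H R with hρ'
  have hempty_n : peel W H R n = ∅ := peel_empty_of_card W H R hprop hdisj
  have hρempty : ρ' ∈ {ℓ | peel W H R ℓ = ∅} := Nat.sInf_mem ⟨n, hempty_n⟩
  have hρempty : peel W H R ρ' = ∅ := hρempty
  have hLfacts : ∀ i : Fin n, 1 ≤ levelOf W H R i ∧ levelOf W H R i ≤ ρ' ∧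
      i ∈ peel W H R (levelOf W H R i - 1) ∧
      ∃ α, free W H R (peel W H R (levelOf W H R i - 1)) i α := by
    intro i
    have hmemρ : i ∉ peel W H R ρ' := by rw [hρempty]; exact Set.notMem_empty i
    have hne : {ℓ | i ∉ peel W H R ℓ}.Nonempty := ⟨ρ', hmemρ⟩
    have hLmem : levelOf W H R i ∈ {ℓ | i ∉ peel W H R ℓ} := Nat.sInf_mem hne
    have hLmem : i ∉ peel W H R (levelOf W H R i) := hLmem
    have hL1 : 1 ≤ levelOf W H R i := by
      rcases Nat.eq_zero_or_pos (levelOf W H R i) with h0 | h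
      · rw [h0] at hLmem; exact absurd (Set.mem_univ i) hLmem
      · exact h
    have hLle : levelOf W H R i ≤ ρ' := Nat.sInf_le hmemρ
    have hprev : i ∈ peel W H R (levelOf W H R i - 1) := by
      by_contra hc
      have : levelOf W H R i ≤ levelOf W H R i - 1 :=
        Nat.sInf_le (show _ ∈ {ℓ | i ∉ peel W H R ℓ} from hc)
      omega
    refine ⟨hL1, hLle, hprev, ?_⟩
    have heq : levelOf W H R i = (levelOf W H R i - 1) + 1 := by omega
    rw [heq] at hLmem
    by_contra hno
    exact hLmem ⟨hprev, hno⟩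
  choose σ hσ using fun i => (hLfacts i).2.2.2
  have hbound : ∀ p ∈ boundaryBox W H, density W H R Set.univ σ p ≤ 2 * ρ' := by
    intro p _
    have hinj : Set.InjOn (fun i => (levelOf W H R i, isHoriz (σ i)))
        {i : Fin n | i ∈ Set.univ ∧ p ∈ (R i).escape W H (σ i)} := by
      intro i hi j hj heq
      by_contra hne
      simp only [Prod.mk.injEq] at heq
      have hLeq : levelOf W H R i = levelOf W H R j := heq.1
      have hbeq : isHoriz (σ i) = isHoriz (σ j) := heq.2
      have hiS : i ∈ peel W H R (levelOf W H R i - 1) := (hLfacts i).2.2.1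
      have hjS : j ∈ peel W H R (levelOf W H R i - 1) := by
        rw [hLeq]; exact (hLfacts j).2.2.1
      have hfi : free W H R (peel W H R (levelOf W H R i - 1)) i (σ i) := hσ i
      have hfj : free W H R (peel W H R (levelOf W H R i - 1)) j (σ j) := by
        rw [hLeq]; exact hσ j
      have hpi : p ∈ (R i).escape W H (σ i) := hi.2
      have hpj : p ∈ (R j).escape W H (σ j) := hj.2
      cases hc : σ i <;> cases hc' : σ j <;> rw [hc] at hpi hfi <;> rw [hc'] at hpj hfj <;>
        first
          | exact horiz_clash hprop hin hiS hjS hne hfi hfj (Or.inl rfl) (Or.inl rfl) hpi hpj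
          | exact horiz_clash hprop hin hiS hjS hne hfi hfj (Or.inl rfl) (Or.inr rfl) hpi hpj
          | exact horiz_clash hprop hin hiS hjS hne hfi hfj (Or.inr rfl) (Or.inl rfl) hpi hpj
          | exact horiz_clash hprop hin hiS hjS hne hfi hfj (Or.inr rfl) (Or.inr rfl) hpi hpj
          | exact vert_clash hprop hin hiS hjS hne hfi hfj (Or.inl rfl) (Or.inl rfl) hpi hpj
          | exact vert_clash hprop hin hiS hjS hne hfi hfj (Or.inl rfl) (Or.inr rfl) hpi hpj
          | exact vert_clash hprop hin hiS hjS hne hfi hfj (Or.inr rfl) (Or.inl rfl) hpi hpj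
          | exact vert_clash hprop hin hiS hjS hne hfi hfj (Or.inr rfl) (Or.inr rfl) hpi hpj
          | simp [isHoriz, hc, hc'] at hbeq
    have himg : (fun i => (levelOf W H R i, isHoriz (σ i))) ''
        {i : Fin n | i ∈ Set.univ ∧ p ∈ (R i).escape W H (σ i)} ⊆
        ↑(Finset.Icc 1 ρ' ×ˢ (Finset.univ : Finset Bool)) := by
      intro x hx
      obtain ⟨i, -, rfl⟩ := hx
      simp only [Finset.coe_product, Set.mem_prod, Finset.mem_coe, Finset.mem_Icc,
        Finset.mem_univ, and_true]
      obtain ⟨h1, h2, -, -⟩ := hLfacts i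
      exact ⟨h1, h2⟩
    calc density W H R Set.univ σ p
        = {i : Fin n | i ∈ Set.univ ∧ p ∈ (R i).escape W H (σ i)}.ncard := rfl
      _ = ((fun i => (levelOf W H R i, isHoriz (σ i))) ''
            {i : Fin n | i ∈ Set.univ ∧ p ∈ (R i).escape W H (σ i)}).ncard :=
          (Set.ncard_image_of_injOn hinj).symm
      _ ≤ (↑(Finset.Icc 1 ρ' ×ˢ (Finset.univ : Finset Bool)) : Set (ℕ × Bool)).ncard :=
          Set.ncard_le_ncard himg (Finset.finite_toSet _)
      _ = (Finset.Icc 1 ρ' ×ˢ (Finset.univ : Finset Bool)).card := Set.ncard_coe_finset _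
      _ = 2 * ρ' := by simp [Finset.card_product, Nat.card_Icc]; omega
  exact Nat.sInf_le ⟨σ, hbound⟩
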